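/- Every prefix MSC obtained from a channel-compliant word satisfies causal delivery: for any two send events e_i ≤ e_j (in the MSC partial order) on the same channel (P,Q), either e_j is unmatched, or both are matched and the matching receive of e_i precedes the matching receive of e_j. -/

import Mathlib

/-- Events: `snd P Q m` is process `P` sending message `m` to `Q`;
    `rcv P Q m` is process `Q` receiving message `m` from `P`. -/
inductive Ev where
  | snd : ℕ → ℕ → ℕ → Ev
  | rcv : ℕ → ℕ → ℕ → Ev
deriving DecidableEq

/-- Message values of send events on channel (P,Q) in w. -/
def sends (w : List Ev) (P Q : ℕ) : List ℕ :=
  w.filterMap fun e => match e with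
    | .snd p q m => if p = P ∧ q = Q then some m else none
    | _ => none

/-- Message values of receive events on channel (P,Q) in w. -/
def recvs (w : List Ev) (P Q : ℕ) : List ℕ :=
  w.filterMap fun e => match e with
    | .rcv p q m => if p = P ∧ q = Q then some m else none
    | _ => none

def channelCompliant (w : List Ev) : Prop :=
  ∀ u, u <+: w → ∀ P Q, recvs u P Q <+: sends u P Q

def complete (w : List Ev) : Prop :=
  ∀ P Q, sends w P Q = recvs w P Q

def bounded (B : ℕ) (w : List Ev) : Prop :=
  ∀ u, u <+: w → ∀ P Q, (sends u P Q).length ≤ (recvs u P Q).length + B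

def halfDuplex (w : List Ev) : Prop :=
  ∀ u, u <+: w → ∀ P Q,
    sends u P Q = recvs u P Q ∨ sends u Q P = recvs u Q P

/-- Send at position i on channel (P,Q) is matched by receive at position j. -/
def Matches (w : List Ev) (P Q i j : ℕ) : Prop :=
  i < j ∧ j < w.length ∧
  (∃ m, w[i]? = some (.snd P Q m) ∧ w[j]? = some (.rcv P Q m)) ∧
  sends (w.take (i+1)) P Q = recvs (w.take (j+1)) P Q

def IsSendAt (w : List Ev) (P Q i : ℕ) : Prop := ∃ m, w[i]? = some (Ev.snd P Q m)
def IsRcvAt (w : List Ev) (P Q i : ℕ) : Prop := ∃ m, w[i]? = some (Ev.rcv P Q m)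
def MatchedAt (w : List Ev) (P Q i : ℕ) : Prop := ∃ j, Matches w P Q i j

/-- The process performing the event. -/
def actor : Ev → ℕ
  | .snd p _ _ => p
  | .rcv _ q _ => q

/-- Projection of a word onto the events of process X. -/
def proj (w : List Ev) (X : ℕ) : List Ev := w.filter (fun e => actor e == X)

/-- Two words induce the same MSC (same per-process orders; with FIFO matching,
    this determines the matching). -/
def sameMSC (w v : List Ev) : Prop := ∀ X, proj w X = proj v X

/-- Existentially B-bounded: some linearisation of msc(w) is B-bounded. -/
def existBounded (B : ℕ) (w : List Ev) : Prop :=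
  ∃ v, channelCompliant v ∧ sameMSC w v ∧ bounded B v

def isSnd : Ev → Prop
  | .snd _ _ _ => True
  | _ => False

def isRcv : Ev → Prop
  | .rcv _ _ _ => True
  | _ => False

/-- Positions i and j lie in the same block of the block decomposition. -/
def SameBlock (blocks : List (List Ev)) (i j : ℕ) : Prop :=
  ∃ t, ((blocks.take t).flatten).length ≤ i ∧ j < ((blocks.take (t+1)).flatten).length

/-- w is k-synchronisable: some linearisation of msc(w) splits into blocks of
    at most k sends followed by at most k receives, with matched pairs co-located. -/
def kSynchronisable (k : ℕ) (w : List Ev) : Prop :=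
  ∃ blocks : List (List Ev),
    channelCompliant blocks.flatten ∧ sameMSC w blocks.flatten ∧
    (∀ b ∈ blocks, ∃ s r, b = s ++ r ∧ s.length ≤ k ∧ r.length ≤ k ∧
      (∀ e ∈ s, isSnd e) ∧ (∀ e ∈ r, isRcv e)) ∧
    (∀ P Q i j, Matches blocks.flatten P Q i j → SameBlock blocks i j)

/-- One step of the indistinguishability relation ∼. -/
inductive Sim1 : List Ev → List Ev → Prop
  | ss (u v : List Ev) (P Q R S m m' : ℕ) (h : P ≠ R) :
      Sim1 (u ++ Ev.snd P Q m :: Ev.snd R S m' :: v)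
           (u ++ Ev.snd R S m' :: Ev.snd P Q m :: v)
  | rr (u v : List Ev) (P Q R S m m' : ℕ) (h : Q ≠ S) :
      Sim1 (u ++ Ev.rcv P Q m :: Ev.rcv R S m' :: v)
           (u ++ Ev.rcv R S m' :: Ev.rcv P Q m :: v)
  | sr (u v : List Ev) (P Q R S m m' : ℕ) (h1 : P ≠ S) (h2 : P ≠ R ∨ Q ≠ S) :
      Sim1 (u ++ Ev.snd P Q m :: Ev.rcv R S m' :: v)
           (u ++ Ev.rcv R S m' :: Ev.snd P Q m :: v)
  | srSame (u v : List Ev) (P Q m m' : ℕ)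
      (h : (recvs u P Q).length < (sends u P Q).length) :
      Sim1 (u ++ Ev.snd P Q m :: Ev.rcv P Q m' :: v)
           (u ++ Ev.rcv P Q m' :: Ev.snd P Q m :: v)

/-- The indistinguishability relation ∼ (finitely many swaps). -/
def Sim : List Ev → List Ev → Prop := Relation.ReflTransGen Sim1

/-- Auxiliary: the `a`-th element of `w.filterMap f` is produced at some position `n` of `w`,
and filtering the prefix up to `n` yields the first `a+1` filtered values. -/
lemma filterMap_nth {α β : Type*} (f : α → Option β) :
    ∀ (w : List α) (a : ℕ), a < (w.filterMap f).length →
    ∃ n e, w[n]? = some e ∧ f e = (w.filterMap f)[a]? ∧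
      (w.take (n+1)).filterMap f = (w.filterMap f).take (a+1) := by
  intro w
  induction w with
  | nil => intro a ha; simp at ha
  | cons h t ih =>
    intro a ha
    cases hf : f h with
    | none =>
      rw [List.filterMap_cons_none hf] at ha
      obtain ⟨n, e, h1, h2, h3⟩ := ih a ha
      refine ⟨n+1, e, by simpa using h1, ?_, ?_⟩
      · rw [List.filterMap_cons_none hf]; exact h2
      · rw [List.take_succ_cons, List.filterMap_cons_none hf,
          List.filterMap_cons_none hf, h3]
    | some b =>
      rw [List.filterMap_cons_some hf] at ha ⊢
      cases a with
      | zero =>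
        refine ⟨0, h, by simp, by simpa using hf, ?_⟩
        rw [List.take_succ_cons, List.take_zero]
        simp [List.filterMap_cons_some hf]
      | succ a' =>
        have ha' : a' < (t.filterMap f).length := by simpa using ha
        obtain ⟨n, e, h1, h2, h3⟩ := ih a' ha'
        refine ⟨n+1, e, by simpa using h1, by simpa using h2, ?_⟩
        simp [List.take_succ_cons, List.filterMap_cons_some hf, h3]

/-- Interpreting a value of the receive extractor. -/
lemma rcv_extract {P Q m : ℕ} {e : Ev}
    (h : (match e with
      | .rcv p q m => if p = P ∧ q = Q then some m else none
      | _ => none) = some m) : e = Ev.rcv P Q m := by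
  cases e with
  | snd p q m' => simp at h
  | rcv p q m' =>
    by_cases hpq : p = P ∧ q = Q
    · simp only [hpq, if_true] at h
      obtain ⟨rfl, rfl⟩ := hpq
      simp_all
    · simp [hpq] at h

/-- causal delivery. In a channel-compliant word, for two sends
    on the same channel with i ≤ j, either the later send is unmatched, or
    both are matched and the matching receives are in the same order. -/
theorem causal_delivery (w : List Ev) (P Q i j : ℕ)
    (h : channelCompliant w)
    (hi : IsSendAt w P Q i) (hj : IsSendAt w P Q j) (hij : i ≤ j) :
    (¬ MatchedAt w P Q j) ∨
    (∃ i' j', Matches w P Q i i' ∧ Matches w P Q j j' ∧ i' ≤ j') := by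
  by_cases hM : MatchedAt w P Q j
  · right
    obtain ⟨j', hjj'⟩ := hM
    obtain ⟨hjlt, hj'len, ⟨mj, hwj, hwj'⟩, heq⟩ := hjj'
    obtain ⟨mi, hwi⟩ := hi
    have hiw : i < w.length := by
      by_contra hc
      push_neg at hc
      rw [List.getElem?_eq_none hc] at hwi
      cases hwi
    -- sends on take (i+1) ends with mi
    have hSi : sends (w.take (i+1)) P Q = sends (w.take i) P Q ++ [mi] := by
      rw [List.take_succ, hwi]
      simp [sends, List.filterMap_append]
    set a0 := (sends (w.take i) P Q).length with ha0
    have hSilen : (sends (w.take (i+1)) P Q).length = a0 + 1 := by simp [hSi, ha0]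
    -- S_i is a prefix of S_j
    have htpre : w.take (i+1) <+: w.take (j+1) := by
      have : w.take (i+1) = (w.take (j+1)).take (i+1) := by
        rw [List.take_take, min_eq_left (by omega)]
      rw [this]; exact List.take_prefix _ _
    have hpre : sends (w.take (i+1)) P Q <+: sends (w.take (j+1)) P Q :=
      htpre.filterMap _
    have hSitake : sends (w.take (i+1)) P Q
        = (sends (w.take (j+1)) P Q).take (a0+1) := by
      have := List.prefix_iff_eq_take.mp hpre
      rwa [hSilen] at this
    have hab : a0 + 1 ≤ (sends (w.take (j+1)) P Q).length := by
      have := hpre.length_le; omega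
    -- find the position of the (a0+1)-th receive inside take (j'+1)
    have hlenR : a0 < (recvs (w.take (j'+1)) P Q).length := by
      rw [← heq]; omega
    have hlenR' : a0 < ((w.take (j'+1)).filterMap
        (fun e => match e with
          | .rcv p q m => if p = P ∧ q = Q then some m else none
          | _ => none)).length := hlenR
    obtain ⟨n, e, hn1, hn2, hn3⟩ := filterMap_nth
      (fun e => match e with
        | .rcv p q m => if p = P ∧ q = Q then some m else none
        | _ => none) (w.take (j'+1)) a0 hlenR'
    -- n is inside the take
    have hnlt : n < j' + 1 := by
      by_contra hc
      push_neg at hc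
      have : (w.take (j'+1))[n]? = none :=
        List.getElem?_eq_none (le_trans (List.length_take_le _ _) hc)
      rw [this] at hn1; cases hn1
    have hwn : w[n]? = some e := by
      rw [List.getElem?_take, if_pos hnlt] at hn1; exact hn1
    -- identify e
    have hSval : (sends (w.take (j+1)) P Q)[a0]? = some mi := by
      have : (sends (w.take (i+1)) P Q)[a0]? = some mi := by
        rw [hSi]; exact List.getElem?_concat_length
      rw [hSitake, List.getElem?_take, if_pos (by omega)] at this
      exact this
    have he : e = Ev.rcv P Q mi := by
      apply rcv_extract
      rw [hn2]
      show (recvs (w.take (j'+1)) P Q)[a0]? = some mi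
      rw [← heq]; exact hSval
    -- recvs of take (n+1) equals sends of take (i+1)
    have hntake : (w.take (j'+1)).take (n+1) = w.take (n+1) := by
      rw [List.take_take, min_eq_left (by omega)]
    have hRn : recvs (w.take (n+1)) P Q = sends (w.take (i+1)) P Q := by
      have h3 : recvs ((w.take (j'+1)).take (n+1)) P Q
          = (recvs (w.take (j'+1)) P Q).take (a0+1) := hn3
      rw [hntake] at h3
      rw [h3, ← heq, ← hSitake]
    -- i < n
    have hin : i < n := by
      rcases lt_trichotomy i n with h' | h' | h'
      · exact h'
      · exfalso; subst h'
        rw [hwi] at hwn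
        injection hwn with hwn'
        rw [he] at hwn'
        exact Ev.noConfusion hwn'
      · exfalso
        have hcc := h (w.take (n+1)) (List.take_prefix _ _) P Q
        have hRlen : (recvs (w.take (n+1)) P Q).length = a0 + 1 := by
          rw [hRn]; exact hSilen
        have hpre2 : sends (w.take (n+1)) P Q <+: sends (w.take i) P Q := by
          have : w.take (n+1) = (w.take i).take (n+1) := by
            rw [List.take_take, min_eq_left (by omega)]
          rw [this]; exact (List.take_prefix _ _).filterMap _
        have := hcc.length_le
        have := hpre2.length_le
        omega
    have hnw : n < w.length := by omega
    refine ⟨n, j', ⟨hin, hnw, ⟨mi, hwi, by rw [hwn, he]⟩, hRn.symm⟩,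
      ⟨hjlt, hj'len, ⟨mj, hwj, hwj'⟩, heq⟩, by omega⟩
  · left; exact hM
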